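/- Let α, γ, λ, ν > 0 and τ ≥ 0. Then ∫₀^∞ ∫₀^∞ e^(−(αx)^λ) · ( e^(−(γ·e^((ατx)^λ/ν)·y)^ν) − e^(−(γy)^ν) ) dy dx = (1/(α·γ)) · Γ(1 + 1/ν) · Γ(1 + 1/λ) · ( (ν/(ν + τ^λ))^(1/λ) − 1 ), where Γ denotes the gamma function. -/

import Mathlib

open MeasureTheory

open Real Set

lemma myIntegrableOn_exp_neg_mul_rpow {p b : ℝ} (hp : 0 < p) (hb : 0 < b) :
    IntegrableOn (fun x : ℝ => Real.exp (-b * x ^ p)) (Ioi 0) := by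
  have hrhs : IntegrableOn (fun t : ℝ => Real.exp (-(b * t)) * (b * t) ^ (1 / p - 1)) (Ioi 0) := by
    have := (integrableOn_Ioi_comp_mul_left_iff
        (fun u : ℝ => Real.exp (-u) * u ^ (1 / p - 1)) 0 hb).mpr
      (by rw [mul_zero]; exact Real.GammaIntegral_convergent (by positivity))
    exact this
  have hrhs2 : IntegrableOn (fun t : ℝ => Real.exp (-(b * t)) * t ^ (1 / p - 1)) (Ioi 0) := by
    refine IntegrableOn.congr_fun (hrhs.const_mul ((b ^ (1 / p - 1))⁻¹))
      (fun t ht => ?_) measurableSet_Ioi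
    rw [mem_Ioi] at ht
    rw [Real.mul_rpow hb.le ht.le]
    have hc : b ^ (1 / p - 1) ≠ 0 := (Real.rpow_pos_of_pos hb _).ne'
    field_simp
  have key := (integrableOn_Ioi_comp_rpow_iff'
      (fun t : ℝ => Real.exp (-(b * t)) * t ^ (1 / p - 1)) hp.ne').mpr hrhs2
  refine key.congr_fun (fun x hx => ?_) measurableSet_Ioi
  rw [mem_Ioi] at hx
  have h1 : p * (1 / p - 1) = 1 - p := by field_simp
  dsimp only
  rw [smul_eq_mul, ← Real.rpow_mul hx.le, h1, mul_left_comm, ← Real.rpow_add hx]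
  norm_num [neg_mul]

lemma myIntegrableOn_J {p c : ℝ} (hp : 0 < p) (hc : 0 < c) :
    IntegrableOn (fun y : ℝ => Real.exp (-((c * y) ^ p))) (Ioi 0) := by
  refine (myIntegrableOn_exp_neg_mul_rpow hp (Real.rpow_pos_of_pos hc p)).congr_fun
    (fun y hy => ?_) measurableSet_Ioi
  rw [mem_Ioi] at hy
  dsimp only
  rw [neg_mul, Real.mul_rpow hc.le hy.le]

lemma myIntegral_J {p c : ℝ} (hp : 0 < p) (hc : 0 < c) :
    ∫ y in Ioi (0:ℝ), Real.exp (-((c * y) ^ p)) = Real.Gamma (1 / p + 1) / c := by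
  have h1 : ∫ y in Ioi (0:ℝ), Real.exp (-((c * y) ^ p))
      = ∫ y in Ioi (0:ℝ), Real.exp (-(c ^ p) * y ^ p) :=
    setIntegral_congr_fun measurableSet_Ioi
      (fun y hy => by rw [Real.mul_rpow hc.le (le_of_lt hy), neg_mul])
  rw [h1, integral_exp_neg_mul_rpow hp (Real.rpow_pos_of_pos hc p)]
  have h2 : (c ^ p : ℝ) ^ (-1 / p) = c⁻¹ := by
    rw [← Real.rpow_mul hc.le, show p * (-1 / p) = -1 by field_simp, Real.rpow_neg_one]
  rw [h2]; ring

/-- Hoeffding covariance integral for the Weibull accelerated failure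
conditionals model: for `α, γ, λ, ν > 0` and `τ ≥ 0`,
`∫₀^∞ ∫₀^∞ e^(−(αx)^λ)·(e^(−(γ·e^((ατx)^λ/ν)·y)^ν) − e^(−(γy)^ν)) dy dx
  = (1/(αγ))·Γ(1+1/ν)·Γ(1+1/λ)·((ν/(ν+τ^λ))^(1/λ) − 1)`. -/
theorem weibull_hoeffding_integral (α γ l ν τ : ℝ) (hα : 0 < α) (hγ : 0 < γ)
    (hl : 0 < l) (hν : 0 < ν) (hτ : 0 ≤ τ) :
    ∫ x in Set.Ioi (0:ℝ), ∫ y in Set.Ioi (0:ℝ),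
        Real.exp (-((α * x) ^ l)) *
          (Real.exp (-((γ * Real.exp ((α * τ * x) ^ l / ν) * y) ^ ν)) -
            Real.exp (-((γ * y) ^ ν)))
      = (1 / (α * γ)) * Real.Gamma (1 + 1 / ν) * Real.Gamma (1 + 1 / l) *
          ((ν / (ν + τ ^ l)) ^ (1 / l) - 1) := by
  have hA : (0:ℝ) < α ^ l := Real.rpow_pos_of_pos hα l
  have hτl : (0:ℝ) ≤ τ ^ l := Real.rpow_nonneg hτ l
  have hB : (0:ℝ) < α ^ l * (1 + τ ^ l / ν) := by positivity
  have inner : ∀ x ∈ Ioi (0:ℝ),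
      (∫ y in Ioi (0:ℝ), Real.exp (-((α * x) ^ l)) *
          (Real.exp (-((γ * Real.exp ((α * τ * x) ^ l / ν) * y) ^ ν)) -
            Real.exp (-((γ * y) ^ ν))))
      = Real.Gamma (1 / ν + 1) / γ *
          (Real.exp (-(α ^ l * (1 + τ ^ l / ν)) * x ^ l) - Real.exp (-(α ^ l) * x ^ l)) := by
    intro x hx
    rw [mem_Ioi] at hx
    have hc1 : 0 < γ * Real.exp ((α * τ * x) ^ l / ν) := by positivity
    rw [integral_const_mul,
      integral_sub (myIntegrableOn_J hν hc1) (myIntegrableOn_J hν hγ),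
      myIntegral_J hν hc1, myIntegral_J hν hγ]
    have e1 : (α * x) ^ l = α ^ l * x ^ l := Real.mul_rpow hα.le hx.le
    have e2 : (α * τ * x) ^ l = α ^ l * τ ^ l * x ^ l := by
      rw [Real.mul_rpow (by positivity) hx.le, Real.mul_rpow hα.le hτ]
    rw [e1, e2]
    rw [show -(α ^ l * (1 + τ ^ l / ν)) * x ^ l
        = -(α ^ l * x ^ l) + -(α ^ l * τ ^ l * x ^ l / ν) by field_simp; ring,
      Real.exp_add, Real.exp_neg (α ^ l * τ ^ l * x ^ l / ν)]
    field_simp [Real.exp_ne_zero]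
  rw [setIntegral_congr_fun measurableSet_Ioi inner, integral_const_mul,
    integral_sub (myIntegrableOn_exp_neg_mul_rpow hl hB) (myIntegrableOn_exp_neg_mul_rpow hl hA),
    integral_exp_neg_mul_rpow hl hB, integral_exp_neg_mul_rpow hl hA]
  have hAinv : (α ^ l : ℝ) ^ (-1 / l) = α⁻¹ := by
    rw [← Real.rpow_mul hα.le, show l * (-1 / l) = -1 by field_simp, Real.rpow_neg_one]
  have hfac : (0:ℝ) < 1 + τ ^ l / ν := by positivity
  have hBinv : (α ^ l * (1 + τ ^ l / ν) : ℝ) ^ (-1 / l)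
      = α⁻¹ * (ν / (ν + τ ^ l)) ^ (1 / l) := by
    rw [Real.mul_rpow hA.le hfac.le, hAinv]
    congr 1
    rw [show (1 + τ ^ l / ν : ℝ) = (ν + τ ^ l) / ν by field_simp,
      show (-1 / l : ℝ) = -(1 / l) by ring, Real.rpow_neg (by positivity),
      ← Real.inv_rpow (by positivity), inv_div]
  rw [hAinv, hBinv, show (1 + 1 / ν : ℝ) = 1 / ν + 1 by ring,
    show (1 + 1 / l : ℝ) = 1 / l + 1 by ring]
  field_simp
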